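/- Let G₀, G₁, G₂, ... be differentiable functions from [0,1] to ℝ, each with convex derivative. If sup_{t∈[0,1]} |G_k(t) - G₀(t)| → 0 as k → ∞, then for any fixed δ ∈ (0, 1/2], sup_{t∈[δ,1-δ]} |G_k'(t) - G₀'(t)| → 0. -/
import Mathlib


open Set Filter

/-- Mean value theorem tailored to `derivWithin _ (Icc 0 1)` at interior points. -/
lemma stmt5_mvt (g : ℝ → ℝ) (hg : DifferentiableOn ℝ g (Icc (0 : ℝ) 1))
    {s h : ℝ} (hh : 0 < h) (hs : 0 < s) (hsh : s + h < 1) :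
    ∃ c ∈ Ioo s (s + h),
      derivWithin g (Icc (0 : ℝ) 1) c = (g (s + h) - g s) / h := by
  have hab : s < s + h := by linarith
  have hsub : Icc s (s + h) ⊆ Icc (0 : ℝ) 1 := by
    intro x hx
    exact ⟨by linarith [hx.1], by linarith [hx.2]⟩
  have hsub' : Ioo s (s + h) ⊆ Icc (0 : ℝ) 1 := fun x hx =>
    hsub ⟨le_of_lt hx.1, le_of_lt hx.2⟩
  have hcont : ContinuousOn g (Icc s (s + h)) := (hg.continuousOn).mono hsub
  have hd : DifferentiableOn ℝ g (Ioo s (s + h)) := hg.mono hsub'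
  obtain ⟨c, hc, hder⟩ := exists_deriv_eq_slope g hab hcont hd
  refine ⟨c, hc, ?_⟩
  have hmem : Icc (0 : ℝ) 1 ∈ nhds c :=
    Icc_mem_nhds (by linarith [hc.1]) (by linarith [hc.2])
  rw [derivWithin_of_mem_nhds hmem, hder]
  congr 1
  ring

set_option maxHeartbeats 1000000 in
theorem stmt_5 (G : ℕ → ℝ → ℝ)
    (hdiff : ∀ k, DifferentiableOn ℝ (G k) (Icc (0 : ℝ) 1))
    (hconv : ∀ k, ConvexOn ℝ (Icc (0 : ℝ) 1) (fun t => derivWithin (G k) (Icc (0 : ℝ) 1) t))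
    (hunif : Tendsto (fun k => ⨆ t : Icc (0 : ℝ) 1, |G k t - G 0 t|) atTop (nhds 0))
    (δ : ℝ) (hδ : δ ∈ Ioc (0 : ℝ) (1 / 2)) :
    Tendsto (fun k => ⨆ t : Icc δ (1 - δ),
        |derivWithin (G k) (Icc (0 : ℝ) 1) t - derivWithin (G 0) (Icc (0 : ℝ) 1) t|)
      atTop (nhds 0) := by
  obtain ⟨hδ0, hδ2⟩ := hδ
  set f : ℕ → ℝ → ℝ := fun k => derivWithin (G k) (Icc (0 : ℝ) 1) with hf
  -- boundedness of |G k - G 0| on [0,1]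
  have bddG : ∀ k, BddAbove (range fun t : Icc (0 : ℝ) 1 => |G k t - G 0 t|) := by
    intro k
    have hc : ContinuousOn (fun t => |G k t - G 0 t|) (Icc (0 : ℝ) 1) :=
      (((hdiff k).continuousOn).sub ((hdiff 0).continuousOn)).abs
    have := (isCompact_Icc.image_of_continuousOn hc).bddAbove
    rwa [Set.image_eq_range] at this
  -- continuity of f 0 on the interior
  have hconv0 : ConvexOn ℝ (Ioo (0 : ℝ) 1) (f 0) :=
    (hconv 0).subset Ioo_subset_Icc_self (convex_Ioo _ _)
  have hcont0 : ContinuousOn (f 0) (Ioo (0 : ℝ) 1) := hconv0.continuousOn isOpen_Ioo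
  -- uniform continuity on J = [δ/2, 1-δ/2]
  have hJsub : Icc (δ / 2) (1 - δ / 2) ⊆ Ioo (0 : ℝ) 1 := by
    intro x hx
    constructor <;> [linarith [hx.1]; linarith [hx.2]]
  have hUC : UniformContinuousOn (f 0) (Icc (δ / 2) (1 - δ / 2)) :=
    isCompact_Icc.uniformContinuousOn_of_continuous (hcont0.mono hJsub)
  rw [Metric.tendsto_atTop]
  intro ε hε
  -- modulus of continuity for ε/16
  rw [Metric.uniformContinuousOn_iff] at hUC
  obtain ⟨d, hd0, hmod⟩ := hUC (ε / 16) (by linarith)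
  -- mesh size h
  set h : ℝ := min (δ / 8) (d / 8) with hhdef
  have hh0 : 0 < h := lt_min (by linarith) (by linarith)
  have hhδ : h ≤ δ / 8 := min_le_left _ _
  have hhd : h ≤ d / 8 := min_le_right _ _
  -- eventually |G k - G 0| ≤ ε h / 32 on [0,1]
  obtain ⟨N, hN⟩ := (Metric.tendsto_atTop.1 hunif) (ε * h / 32) (by positivity)
  refine ⟨N, fun k hk => ?_⟩
  have hGsup : (⨆ t : Icc (0 : ℝ) 1, |G k t - G 0 t|) < ε * h / 32 := by
    have := hN k hk
    rw [Real.dist_eq, sub_zero] at this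
    exact lt_of_le_of_lt (le_abs_self _) this
  have hG : ∀ s : ℝ, s ∈ Icc (0 : ℝ) 1 → |G k s - G 0 s| ≤ ε * h / 32 := by
    intro s hs
    have := le_ciSup (bddG k) (⟨s, hs⟩ : Icc (0 : ℝ) 1)
    exact le_of_lt (lt_of_le_of_lt this hGsup)
  -- difference quotient comparison
  have hD : ∀ s : ℝ, 0 ≤ s → s + h ≤ 1 →
      |(G k (s + h) - G k s) / h - (G 0 (s + h) - G 0 s) / h| ≤ ε / 16 := by
    intro s hs1 hs2
    have e : (G k (s + h) - G k s) / h - (G 0 (s + h) - G 0 s) / h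
        = ((G k (s + h) - G 0 (s + h)) - (G k s - G 0 s)) / h := by
      field_simp
      ring
    rw [e, abs_div, abs_of_pos hh0]
    rw [div_le_iff₀ hh0]
    have h1 : |G k (s + h) - G 0 (s + h)| ≤ ε * h / 32 :=
      hG (s + h) ⟨by linarith, hs2⟩
    have h2 : |G k s - G 0 s| ≤ ε * h / 32 := hG s ⟨hs1, by linarith⟩
    calc |(G k (s + h) - G 0 (s + h)) - (G k s - G 0 s)|
        ≤ |G k (s + h) - G 0 (s + h)| + |G k s - G 0 s| := abs_sub _ _
      _ ≤ ε * h / 32 + ε * h / 32 := add_le_add h1 h2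
      _ = ε / 16 * h := by ring
  -- main pointwise estimate
  have key : ∀ t : ℝ, t ∈ Icc δ (1 - δ) → |f k t - f 0 t| ≤ ε / 2 := by
    intro t ht
    obtain ⟨ht1, ht2⟩ := ht
    have hδ1 : δ ≤ 1 / 2 := hδ2
    -- basic position facts
    have p1 : 0 < t - h := by linarith
    have p2 : t + 3 * h < 1 := by linarith
    have p3 : t + h < 1 := by linarith
    have p4 : 0 < t := by linarith
    -- MVT points for G k
    obtain ⟨ξ₁, hξ₁, eξ₁⟩ := stmt5_mvt (G k) (hdiff k) hh0 p1 (by linarith)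
    obtain ⟨ξ₂, hξ₂, eξ₂⟩ := stmt5_mvt (G k) (hdiff k) hh0 p4 p3
    obtain ⟨ξ₄, hξ₄, eξ₄⟩ := stmt5_mvt (G k) (hdiff k) hh0 (s := t + 2 * h)
      (by linarith) (by linarith)
    -- MVT points for G 0
    obtain ⟨ζ₁, hζ₁, eζ₁⟩ := stmt5_mvt (G 0) (hdiff 0) hh0 p1 (by linarith)
    obtain ⟨ζ₂, hζ₂, eζ₂⟩ := stmt5_mvt (G 0) (hdiff 0) hh0 p4 p3
    obtain ⟨ζ₄, hζ₄, eζ₄⟩ := stmt5_mvt (G 0) (hdiff 0) hh0 (s := t + 2 * h)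
      (by linarith) (by linarith)
    -- rewrite t - h + h = t etc.
    rw [show t - h + h = t by ring] at hξ₁ hζ₁ eξ₁ eζ₁
    rw [show t + 2 * h + h = t + 3 * h by ring] at hξ₄ hζ₄ eξ₄ eζ₄
    -- memberships in J for modulus
    have memJ : ∀ x : ℝ, t - h ≤ x → x ≤ t + 3 * h → x ∈ Icc (δ / 2) (1 - δ / 2) := by
      intro x hx1 hx2
      constructor <;> linarith
    have htJ : t ∈ Icc (δ / 2) (1 - δ / 2) := memJ t (by linarith) (by linarith)
    have hζ₁J : ζ₁ ∈ Icc (δ / 2) (1 - δ / 2) :=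
      memJ ζ₁ (le_of_lt hζ₁.1) (by linarith [hζ₁.2])
    have hζ₂J : ζ₂ ∈ Icc (δ / 2) (1 - δ / 2) :=
      memJ ζ₂ (by linarith [hζ₂.1]) (by linarith [hζ₂.2])
    have hζ₄J : ζ₄ ∈ Icc (δ / 2) (1 - δ / 2) :=
      memJ ζ₄ (by linarith [hζ₄.1]) (le_of_lt hζ₄.2)
    -- modulus estimates: |f 0 ζᵢ - f 0 t| ≤ ε/16, |f 0 ζ₄ - f 0 ζ₂| ≤ ε/16
    have mod1 : |f 0 ζ₁ - f 0 t| ≤ ε / 16 := by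
      have := hmod ζ₁ hζ₁J t htJ (by
        rw [Real.dist_eq]
        rw [abs_lt]
        constructor <;> [linarith [hζ₁.1, hζ₁.2]; linarith [hζ₁.1, hζ₁.2]])
      rw [Real.dist_eq] at this
      exact le_of_lt this
    have mod2 : |f 0 ζ₂ - f 0 t| ≤ ε / 16 := by
      have := hmod ζ₂ hζ₂J t htJ (by
        rw [Real.dist_eq, abs_lt]
        constructor <;> linarith [hζ₂.1, hζ₂.2])
      rw [Real.dist_eq] at this
      exact le_of_lt this
    have mod3 : |f 0 ζ₄ - f 0 ζ₂| ≤ ε / 16 := by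
      have := hmod ζ₄ hζ₄J ζ₂ hζ₂J (by
        rw [Real.dist_eq, abs_lt]
        constructor <;> linarith [hζ₂.1, hζ₂.2, hζ₄.1, hζ₄.2])
      rw [Real.dist_eq] at this
      exact le_of_lt this
    -- difference quotient comparisons
    have D1 : |f k ξ₁ - f 0 ζ₁| ≤ ε / 16 := by
      simp only [hf]; rw [eξ₁, eζ₁]
      have := hD (t - h) (by linarith) (by linarith)
      rw [show t - h + h = t by ring] at this
      exact this
    have D2 : |f k ξ₂ - f 0 ζ₂| ≤ ε / 16 := by
      simp only [hf]; rw [eξ₂, eζ₂]; exact hD t (by linarith) (by linarith)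
    have D4 : |f k ξ₄ - f 0 ζ₄| ≤ ε / 16 := by
      simp only [hf]; rw [eξ₄, eζ₄]
      have := hD (t + 2 * h) (by linarith) (by linarith)
      rw [show t + 2 * h + h = t + 3 * h by ring] at this
      exact this
    -- memberships in Icc 0 1
    have hξ₁I : ξ₁ ∈ Icc (0 : ℝ) 1 := ⟨by linarith [hξ₁.1], by linarith [hξ₁.2]⟩
    have hξ₂I : ξ₂ ∈ Icc (0 : ℝ) 1 := ⟨by linarith [hξ₂.1], by linarith [hξ₂.2]⟩
    have hξ₄I : ξ₄ ∈ Icc (0 : ℝ) 1 := ⟨by linarith [hξ₄.1], by linarith [hξ₄.2]⟩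
    have htI : t ∈ Icc (0 : ℝ) 1 := ⟨by linarith, by linarith⟩
    -- UPPER bound: f k t ≤ max (f k ξ₁) (f k ξ₂)
    have hupper : f k t ≤ max (f k ξ₁) (f k ξ₂) := by
      have hseg : t ∈ segment ℝ ξ₁ ξ₂ := by
        rw [segment_eq_Icc (by linarith [hξ₁.2, hξ₂.1] : ξ₁ ≤ ξ₂)]
        exact ⟨le_of_lt hξ₁.2, le_of_lt hξ₂.1⟩
      exact (hconv k).le_on_segment hξ₁I hξ₂I hseg
    have hub : f k t - f 0 t ≤ ε / 8 := by
      have b1 : f k ξ₁ ≤ f 0 t + ε / 8 := by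
        have := abs_le.1 D1
        have := abs_le.1 mod1
        linarith [this.2]
      have b2 : f k ξ₂ ≤ f 0 t + ε / 8 := by
        have := abs_le.1 D2
        have := abs_le.1 mod2
        linarith [this.2]
      have := max_le b1 b2
      linarith [hupper]
    -- LOWER bound via slope monotonicity
    have hslope : (f k ξ₂ - f k t) / (ξ₂ - t) ≤ (f k ξ₄ - f k ξ₂) / (ξ₄ - ξ₂) :=
      (hconv k).slope_mono_adjacent htI hξ₄I hξ₂.1 (by linarith [hξ₂.2, hξ₄.1])
    have ha0 : 0 < ξ₂ - t := by linarith [hξ₂.1]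
    have hb0 : 0 < ξ₄ - ξ₂ := by linarith [hξ₂.2, hξ₄.1]
    have hab : ξ₂ - t ≤ ξ₄ - ξ₂ := by linarith [hξ₂.1, hξ₂.2, hξ₄.1]
    have hB : |f k ξ₄ - f k ξ₂| ≤ 3 * ε / 16 := by
      have := abs_le.1 D2
      have := abs_le.1 D4
      have := abs_le.1 mod3
      rw [abs_le]
      constructor <;> linarith [(abs_le.1 D2).1, (abs_le.1 D2).2,
        (abs_le.1 D4).1, (abs_le.1 D4).2, (abs_le.1 mod3).1, (abs_le.1 mod3).2]
    have hA : f k ξ₂ - f k t ≤ |f k ξ₄ - f k ξ₂| := by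
      have h1 : f k ξ₂ - f k t ≤ (ξ₂ - t) * ((f k ξ₄ - f k ξ₂) / (ξ₄ - ξ₂)) := by
        rw [div_le_iff₀ ha0] at hslope
        linarith [hslope]
      calc f k ξ₂ - f k t ≤ (ξ₂ - t) * ((f k ξ₄ - f k ξ₂) / (ξ₄ - ξ₂)) := h1
        _ ≤ |(ξ₂ - t) * ((f k ξ₄ - f k ξ₂) / (ξ₄ - ξ₂))| := le_abs_self _
        _ = (ξ₂ - t) * (|f k ξ₄ - f k ξ₂| / (ξ₄ - ξ₂)) := by
            rw [abs_mul, abs_of_pos ha0, abs_div, abs_of_pos hb0]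
        _ ≤ (ξ₄ - ξ₂) * (|f k ξ₄ - f k ξ₂| / (ξ₄ - ξ₂)) := by
            apply mul_le_mul_of_nonneg_right hab
            positivity
        _ = |f k ξ₄ - f k ξ₂| := by field_simp
    have hlb : f 0 t - f k t ≤ 5 * ε / 16 := by
      have b3 : f k ξ₂ ≥ f 0 t - ε / 8 := by
        have := abs_le.1 D2
        have := abs_le.1 mod2
        linarith [(abs_le.1 D2).1, (abs_le.1 mod2).1]
      have : f k t ≥ f k ξ₂ - 3 * ε / 16 := by linarith [hA, hB]
      linarith
    rw [abs_le]
    exact ⟨by linarith, by linarith⟩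
  -- conclude about the sup
  have hne : (Icc δ (1 - δ)).Nonempty := nonempty_Icc.2 (by linarith)
  haveI := hne.to_subtype
  have bddK : BddAbove (range fun t : Icc δ (1 - δ) => |f k t - f 0 t|) := by
    refine ⟨ε / 2, ?_⟩
    rintro x ⟨t, rfl⟩
    exact key t t.2
  have hsle : (⨆ t : Icc δ (1 - δ), |f k t - f 0 t|) ≤ ε / 2 :=
    ciSup_le fun t => key t t.2
  have hsge : 0 ≤ ⨆ t : Icc δ (1 - δ), |f k t - f 0 t| := by
    obtain ⟨t, ht⟩ := hne
    exact le_trans (abs_nonneg _) (le_ciSup bddK ⟨t, ht⟩)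
  rw [Real.dist_eq, sub_zero, abs_of_nonneg hsge]
  linarith
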